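/- Let $G$ be a totally disconnected locally compact group and $(\pi, V)$ a smooth admissible representation of $G$ over $\mathbb{C}$. Let $\|\cdot\|$ be a norm on $V$ with respect to which $\pi$ is continuous, and let $(\widetilde\pi, \widetilde V)$ denote the extension of $\pi$ to the completion of $V$ with respect to this norm. Then every non-zero closed $G$-invariant subspace of $\widetilde V$ intersects $V$ non-trivially; moreover, $(\pi, V)$ is algebraically irreducible if and only if $(\widetilde\pi, \widetilde V)$ is topologically irreducible. -/

import Mathlib

open UniformSpace Set Filter Topology Pointwise

set_option linter.unusedSectionVars false
set_option maxHeartbeats 1000000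

noncomputable section

namespace SmoothRep

variable {G : Type} [Group G] [TopologicalSpace G] [IsTopologicalGroup G]
  [LocallyCompactSpace G] [TotallyDisconnectedSpace G]
  {V : Type} [NormedAddCommGroup V] [NormedSpace ℂ V]

/-- The submodule of `K`-fixed vectors of a representation. -/
def fixedSubmodule (π : Representation ℂ G V) (K : Subgroup G) : Submodule ℂ V where
  carrier := {v : V | ∀ k ∈ K, π k v = v}
  add_mem' := by
    intro a b ha hb k hk
    simp [map_add, ha k hk, hb k hk]
  zero_mem' := by
    intro k hk
    simp
  smul_mem' := by
    intro c v hv k hk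
    simp [map_smul, hv k hk]

/-- A representation is smooth if every vector has open stabiliser. -/
def IsSmooth (π : Representation ℂ G V) : Prop :=
  ∀ v : V, IsOpen {g : G | π g v = v}

/-- A representation is admissible if the fixed vectors of every compact open subgroup form a
finite-dimensional subspace. -/
def IsAdmissible (π : Representation ℂ G V) : Prop :=
  ∀ K : Subgroup G, IsCompact (K : Set G) → IsOpen (K : Set G) →
    FiniteDimensional ℂ (fixedSubmodule π K)

/-- `(π, V)` is algebraically irreducible: it has no invariant subspace other than `⊥`, `⊤`. -/
def AlgIrreducible (π : Representation ℂ G V) : Prop :=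
  ∀ U : Submodule ℂ V, (∀ g : G, ∀ v ∈ U, π g v ∈ U) → U = ⊥ ∨ U = ⊤

/-- The stabilizer of a vector, as a subgroup. -/
def stab (π : Representation ℂ G V) (v : V) : Subgroup G where
  carrier := {g | π g v = v}
  one_mem' := by simp
  mul_mem' := by
    intro a b ha hb
    simp only [Set.mem_setOf_eq] at *
    rw [map_mul, Module.End.mul_apply, hb, ha]
  inv_mem' := by
    intro a ha
    simp only [Set.mem_setOf_eq] at *
    conv_lhs => rw [← ha]
    rw [← Module.End.mul_apply, ← map_mul, inv_mul_cancel, map_one, Module.End.one_apply]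

/-- variant of `TopologicalGroup.exist_mul_closure_nhd` for a compact clopen set rather than
a compact ambient group. -/
theorem exist_mul_closure_nhd' {W : Set G} (Wcpt : IsCompact W) (WClopen : IsClopen W) :
    ∃ T ∈ 𝓝 (1 : G), W * T ⊆ W := by
  apply Wcpt.induction_on (p := fun S ↦ ∃ T ∈ 𝓝 (1 : G), S * T ⊆ W)
    ⟨Set.univ, by simp only [univ_mem, empty_mul, empty_subset, and_self]⟩
    (fun _ _ huv ⟨T, hT, mem⟩ ↦ ⟨T, hT, (mul_subset_mul_right huv).trans mem⟩)
    (fun U V ⟨T₁, hT₁, mem1⟩ ⟨T₂, hT₂, mem2⟩ ↦ ⟨T₁ ∩ T₂, inter_mem hT₁ hT₂, by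
      rw [union_mul]
      exact union_subset (mul_subset_mul_left inter_subset_left |>.trans mem1)
        (mul_subset_mul_left inter_subset_right |>.trans mem2)⟩)
  intro x memW
  have : (x, 1) ∈ (fun p : G × G ↦ p.1 * p.2) ⁻¹' W := by simp [memW]
  rcases isOpen_prod_iff.mp (continuous_mul.isOpen_preimage W <| WClopen.2) x 1 this with
    ⟨U, V, Uopen, Vopen, xmemU, onememV, prodsub⟩
  have h6 : U * V ⊆ W := mul_subset_iff.mpr (fun _ hx _ hy ↦ prodsub (mk_mem_prod hx hy))
  exact ⟨U ∩ W, ⟨U, Uopen.mem_nhds xmemU, W, fun _ a ↦ a, rfl⟩,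
    V, IsOpen.mem_nhds Vopen onememV, fun _ a ↦ h6 ((mul_subset_mul_right inter_subset_left) a)⟩

theorem exist_openSubgroup_sub_compact_clopen {W : Set G} (Wcpt : IsCompact W)
    (WClopen : IsClopen W) (einW : (1 : G) ∈ W) :
    ∃ H : Subgroup G, IsOpen (H : Set G) ∧ (H : Set G) ⊆ W := by
  rcases exist_mul_closure_nhd' Wcpt WClopen with ⟨S, Smemnhds, mulclose⟩
  rcases mem_nhds_iff.mp Smemnhds with ⟨U', UsubS, Uopen', onememU⟩
  obtain ⟨V, hVnhd, hVinv, hVopen, hVmul⟩ :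
      ∃ V : Set G, V ∈ 𝓝 (1 : G) ∧ V⁻¹ = V ∧ IsOpen V ∧ W * V ⊆ W := by
    refine ⟨U' ∩ U'⁻¹, ?_, by simp [inter_comm], Uopen'.inter Uopen'.inv, ?_⟩
    · simp [Uopen'.mem_nhds onememU, inv_mem_nhds_one]
    · exact fun a ha ↦ mulclose (mul_subset_mul_left UsubS (mul_subset_mul_left inter_subset_left ha))
  let S' : Subgroup G :=
  { carrier := ⋃ n, V ^ (n + 1)
    mul_mem' := fun ha hb ↦ by
      rcases mem_iUnion.mp ha with ⟨k, hk⟩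
      rcases mem_iUnion.mp hb with ⟨l, hl⟩
      apply mem_iUnion.mpr
      use k + 1 + l
      rw [add_assoc, pow_add]
      exact Set.mul_mem_mul hk hl
    one_mem' := by
      apply mem_iUnion.mpr
      use 0
      simp [mem_of_mem_nhds hVnhd]
    inv_mem' := fun ha ↦ by
      rcases mem_iUnion.mp ha with ⟨k, hk⟩
      apply mem_iUnion.mpr
      use k
      rw [← hVinv]
      simpa only [inv_pow, Set.mem_inv, inv_inv] using hk }
  have hopen : IsOpen (⋃ n, V ^ (n + 1)) := by
    refine isOpen_iUnion (fun n ↦ ?_)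
    rw [pow_succ]
    exact hVopen.mul_left
  refine ⟨S', hopen, ?_⟩
  have mulVpow (n : ℕ) : W * V ^ (n + 1) ⊆ W := by
    induction' n with n ih
    · simp [hVmul]
    · rw [pow_succ, ← mul_assoc]
      exact (Set.mul_subset_mul_right ih).trans hVmul
  have hVW (n : ℕ) : V ^ (n + 1) ⊆ W * V ^ (n + 1) := by
    intro x xin
    rw [Set.mem_mul]
    exact ⟨1, einW, x, xin, one_mul x⟩
  exact iUnion_subset fun i a hia ↦ mulVpow i (hVW i hia)

/-- van Dantzig : a tdlc group has a compact open subgroup. -/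
theorem exists_compactOpen_subgroup :
    ∃ K : Subgroup G, IsCompact (K : Set G) ∧ IsOpen (K : Set G) := by
  haveI : T1Space G := ⟨fun x => by
    have h := totallyDisconnectedSpace_iff_connectedComponent_singleton.mp ‹_› x
    rw [← h]
    exact isClosed_connectedComponent⟩
  obtain ⟨s, hs, h1s⟩ := exists_compact_mem_nhds (1 : G)
  obtain ⟨W, hWclopen, h1W, hWs⟩ :=
    (loc_compact_Haus_tot_disc_of_zero_dim (H := G)).mem_nhds_iff.mp h1s
  have Wcpt : IsCompact W := hs.of_isClosed_subset hWclopen.isClosed hWs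
  obtain ⟨H, hHopen, hHW⟩ := exist_openSubgroup_sub_compact_clopen Wcpt hWclopen h1W
  exact ⟨H, Wcpt.of_isClosed_subset (H.isClosed_of_isOpen hHopen) hHW, hHopen⟩


/-- Averages of finitely many vectors: norm bound. -/
theorem avg_norm_le {E : Type*} [NormedAddCommGroup E] [NormedSpace ℂ E]
    (m : ℕ) (u : Fin (m + 1) → E) {D : ℝ} (hu : ∀ i, ‖u i‖ ≤ D) :
    ‖((m : ℂ) + 1)⁻¹ • ∑ i, u i‖ ≤ D := by
  rw [norm_smul, norm_inv]
  have h1 : ‖(m : ℂ) + 1‖ = (m : ℝ) + 1 := by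
    rw [show ((m : ℂ) + 1) = ((m + 1 : ℕ) : ℂ) by push_cast; ring, RCLike.norm_natCast]
    push_cast; ring
  rw [h1]
  have h3 : (0 : ℝ) < (m : ℝ) + 1 := by positivity
  have h2 : ‖∑ i, u i‖ ≤ ((m : ℝ) + 1) * D := by
    calc ‖∑ i, u i‖ ≤ ∑ i, ‖u i‖ := norm_sum_le _ _
    _ ≤ ∑ _i : Fin (m + 1), D := Finset.sum_le_sum (fun i _ => hu i)
    _ = ((m : ℝ) + 1) * D := by
        rw [Finset.sum_const, Finset.card_univ, Fintype.card_fin, nsmul_eq_mul]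
        push_cast; ring
  calc ((m : ℝ) + 1)⁻¹ * ‖∑ i, u i‖ ≤ ((m : ℝ) + 1)⁻¹ * (((m : ℝ) + 1) * D) :=
        mul_le_mul_of_nonneg_left h2 (by positivity)
  _ = D := by field_simp

theorem avg_const {E : Type*} [AddCommGroup E] [Module ℂ E] (m : ℕ) (x : E) :
    ((m : ℂ) + 1)⁻¹ • ∑ _i : Fin (m + 1), x = x := by
  have hcast : ((m + 1 : ℕ) : ℂ) = (m : ℂ) + 1 := by push_cast; ring
  have hne : ((m : ℂ) + 1) ≠ 0 := by
    rw [← hcast]; exact_mod_cast Nat.succ_ne_zero m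
  rw [Finset.sum_const, Finset.card_univ, Fintype.card_fin, ← Nat.cast_smul_eq_nsmul ℂ,
    hcast, smul_smul, inv_mul_cancel₀ hne, one_smul]

/-- The average of the finite orbit of a smooth vector under a compact subgroup. -/
theorem exists_average (π : Representation ℂ G V) (hsmooth : IsSmooth π)
    {K : Subgroup G} (hK : IsCompact (K : Set G)) (v : V) :
    ∃ (m : ℕ) (k : Fin (m + 1) → G), (∀ i, k i ∈ K) ∧
      ∀ g ∈ K, π g (((m : ℂ) + 1)⁻¹ • ∑ i, π (k i) v)
        = ((m : ℂ) + 1)⁻¹ • ∑ i, π (k i) v := by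
  classical
  set O : Set V := {x | ∃ g ∈ K, π g v = x} with hO
  have horb : O.Finite := by
    have hopenfib : ∀ c : V, IsOpen {g : G | π g v = c} := by
      intro c
      rw [isOpen_iff_forall_mem_open]
      intro g₀ hg₀
      refine ⟨(g₀ * ·) '' {g : G | π g v = v}, ?_,
        (isOpenMap_mul_left g₀) _ (hsmooth v), ⟨1, by simp, by simp⟩⟩
      rintro _ ⟨h, hh, rfl⟩
      simp only [Set.mem_setOf_eq] at *
      rw [map_mul, Module.End.mul_apply, hh, hg₀]
    obtain ⟨t, ht⟩ := hK.elim_finite_subcover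
      (fun k : {x : G // x ∈ K} => {g : G | π g v = π (↑k) v}) (fun k => hopenfib _)
      (fun g hg => Set.mem_iUnion.mpr ⟨⟨g, hg⟩, rfl⟩)
    refine Set.Finite.subset (Set.Finite.image (fun k : {x : G // x ∈ K} => π (↑k) v)
      t.finite_toSet) ?_
    rintro x ⟨g, hg, rfl⟩
    obtain ⟨k, hk1, hk2⟩ := Set.mem_iUnion₂.mp (ht hg)
    exact ⟨k, hk1, hk2.symm⟩
  have hmemO : ∀ g ∈ K, ∀ x ∈ O, π g x ∈ O := by
    rintro g hg x ⟨a, ha, rfl⟩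
    exact ⟨g * a, mul_mem hg ha, by rw [map_mul, Module.End.mul_apply]⟩
  have hvO : v ∈ O := ⟨1, one_mem K, by simp⟩
  set Of := horb.toFinset with hOf
  have hOfne : Of.Nonempty := ⟨v, horb.mem_toFinset.mpr hvO⟩
  obtain ⟨m, hm⟩ : ∃ m : ℕ, Of.card = m + 1 :=
    ⟨Of.card - 1, (Nat.succ_pred_eq_of_pos (Finset.card_pos.mpr hOfne)).symm⟩
  set e : Fin (m + 1) ≃ {x // x ∈ Of} := (finCongr hm.symm).trans Of.equivFin.symm with he
  have hchoice : ∀ i : Fin (m + 1), ∃ g, g ∈ K ∧ π g v = ↑(e i) := by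
    intro i
    have : (↑(e i) : V) ∈ O := horb.mem_toFinset.mp (e i).2
    obtain ⟨g, hg, hgv⟩ := this
    exact ⟨g, hg, hgv⟩
  choose k hkK hkv using hchoice
  refine ⟨m, k, hkK, ?_⟩
  have hsum : ∑ i, π (k i) v = ∑ x ∈ Of, x := by
    calc ∑ i, π (k i) v = ∑ i, (↑(e i) : V) := Finset.sum_congr rfl (fun i _ => hkv i)
    _ = ∑ y : {x // x ∈ Of}, (↑y : V) := Equiv.sum_comp e _
    _ = ∑ x ∈ Of, x := Finset.sum_coe_sort Of (fun x => x)
  intro g hg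
  have hperm : ∑ x ∈ Of, π g x = ∑ x ∈ Of, x := by
    refine Finset.sum_nbij' (fun x => π g x) (fun x => π g⁻¹ x) ?_ ?_ ?_ ?_ ?_
    · intro x hx
      exact horb.mem_toFinset.mpr (hmemO g hg x (horb.mem_toFinset.mp hx))
    · intro x hx
      exact horb.mem_toFinset.mpr (hmemO g⁻¹ (inv_mem hg) x (horb.mem_toFinset.mp hx))
    · intro x _
      show (π g⁻¹) ((π g) x) = x
      rw [show (π g⁻¹) ((π g) x) = (π g⁻¹ * π g) x from rfl, ← map_mul, inv_mul_cancel,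
        map_one, Module.End.one_apply]
    · intro x _
      show (π g) ((π g⁻¹) x) = x
      rw [show (π g) ((π g⁻¹) x) = (π g * π g⁻¹) x from rfl, ← map_mul, mul_inv_cancel,
        map_one, Module.End.one_apply]
    · intro x _
      rfl
  rw [map_smul, hsum, map_sum, hperm]


section Pit

variable (π : Representation ℂ G V) (πt : G → (Completion V →L[ℂ] Completion V))

theorem pit_mul
    (hcompat : ∀ (g : G) (v : V), πt g (↑v : Completion V) = (↑(π g v) : Completion V))
    (g h : G) (x : Completion V) : πt (g * h) x = πt g (πt h x) := by
  refine Completion.induction_on x ?_ ?_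
  · exact isClosed_eq (πt (g * h)).continuous ((πt g).continuous.comp (πt h).continuous)
  · intro v
    rw [hcompat, hcompat, hcompat, map_mul]
    rfl

theorem pit_norm_le
    (hcompat : ∀ (g : G) (v : V), πt g (↑v : Completion V) = (↑(π g v) : Completion V))
    (g : G) {c : ℝ} (hb : ∀ v : V, ‖π g v‖ ≤ c * ‖v‖) (x : Completion V) :
    ‖πt g x‖ ≤ c * ‖x‖ := by
  refine Completion.induction_on x ?_ ?_
  · exact isClosed_le ((πt g).continuous.norm) (continuous_const.mul continuous_norm)
  · intro v
    rw [hcompat, Completion.norm_coe, Completion.norm_coe]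
    exact hb v

theorem exists_uniform_bound
    (hcont : ∀ v : V, Continuous fun g : G => π g v)
    (hcompat : ∀ (g : G) (v : V), πt g (↑v : Completion V) = (↑(π g v) : Completion V))
    {S : Set G} (hS : IsCompact S) :
    ∃ C : ℝ, 1 ≤ C ∧ ∀ g ∈ S, ∀ x : Completion V, ‖πt g x‖ ≤ C * ‖x‖ := by
  classical
  haveI : Nonempty G := ⟨1⟩
  set F : ℕ → Set G := fun n => {g | ∀ v : V, ‖π g v‖ ≤ (n : ℝ) * ‖v‖} with hF
  have hFclosed : ∀ n, IsClosed (F n) := by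
    intro n
    have : F n = ⋂ v : V, {g : G | ‖π g v‖ ≤ (n : ℝ) * ‖v‖} := by ext g; simp [hF]
    rw [this]
    exact isClosed_iInter (fun v => isClosed_le ((hcont v).norm) continuous_const)
  have hFcover : ⋃ n, F n = Set.univ := by
    rw [Set.eq_univ_iff_forall]
    intro g
    obtain ⟨n, hn⟩ := exists_nat_ge ‖πt g‖
    refine Set.mem_iUnion.mpr ⟨n, fun v => ?_⟩
    have h1 : ‖π g v‖ = ‖πt g (↑v : Completion V)‖ := by rw [hcompat, Completion.norm_coe]
    rw [h1]
    calc ‖πt g (↑v : Completion V)‖ ≤ ‖πt g‖ * ‖(↑v : Completion V)‖ := (πt g).le_opNorm _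
    _ ≤ (n : ℝ) * ‖v‖ := by
        rw [Completion.norm_coe]
        exact mul_le_mul_of_nonneg_right hn (norm_nonneg v)
  obtain ⟨n₀, hn₀⟩ := nonempty_interior_of_iUnion_of_closed hFclosed hFcover
  obtain ⟨g₀, hg₀⟩ := hn₀
  have hcov : S ⊆ ⋃ a : {x : G // x ∈ S}, ((↑a * g₀⁻¹) * ·) '' interior (F n₀) := by
    intro g hg
    exact Set.mem_iUnion.mpr ⟨⟨g, hg⟩, ⟨g₀, hg₀, by group⟩⟩
  obtain ⟨t, ht⟩ := hS.elim_finite_subcover _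
    (fun a => (isOpenMap_mul_left _) _ isOpen_interior) hcov
  set C : ℝ := 1 + ∑ a ∈ t, ‖πt (↑a * g₀⁻¹)‖ * (n₀ : ℝ) with hC
  have hterm_nonneg : ∀ a ∈ t, 0 ≤ ‖πt (↑a * g₀⁻¹)‖ * (n₀ : ℝ) := by
    intro a _
    positivity
  have hsum_nonneg : 0 ≤ ∑ a ∈ t, ‖πt (↑a * g₀⁻¹)‖ * (n₀ : ℝ) :=
    Finset.sum_nonneg hterm_nonneg
  refine ⟨C, by rw [hC]; linarith, ?_⟩
  intro g hg y
  obtain ⟨a, ha, x, hx, hgx⟩ : ∃ a ∈ t, ∃ x ∈ interior (F n₀), (↑a * g₀⁻¹) * x = g := by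
    have := ht hg
    rw [Set.mem_iUnion₂] at this
    obtain ⟨a, ha, hmem⟩ := this
    obtain ⟨x, hx, hax⟩ := hmem
    exact ⟨a, ha, x, hx, hax⟩
  have hxF : x ∈ F n₀ := interior_subset hx
  have hb := pit_norm_le π πt hcompat x (fun v => hxF v)
  have h1 : πt g y = πt (↑a * g₀⁻¹) (πt x y) := by
    rw [← hgx, pit_mul π πt hcompat]
  rw [h1]
  calc ‖πt (↑a * g₀⁻¹) (πt x y)‖ ≤ ‖πt (↑a * g₀⁻¹)‖ * ‖πt x y‖ := ContinuousLinearMap.le_opNorm _ _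
  _ ≤ ‖πt (↑a * g₀⁻¹)‖ * ((n₀ : ℝ) * ‖y‖) :=
      mul_le_mul_of_nonneg_left (hb y) (norm_nonneg _)
  _ = (‖πt (↑a * g₀⁻¹)‖ * (n₀ : ℝ)) * ‖y‖ := by ring
  _ ≤ C * ‖y‖ := by
      have h2 : ‖πt (↑a * g₀⁻¹)‖ * (n₀ : ℝ) ≤ ∑ b ∈ t, ‖πt (↑b * g₀⁻¹)‖ * (n₀ : ℝ) :=
        Finset.single_le_sum hterm_nonneg ha
      have h3 : ‖πt (↑a * g₀⁻¹)‖ * (n₀ : ℝ) ≤ C := by rw [hC]; linarith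
      exact mul_le_mul_of_nonneg_right h3 (norm_nonneg y)

theorem coe_avg
    (hcompat : ∀ (g : G) (v : V), πt g (↑v : Completion V) = (↑(π g v) : Completion V))
    (m : ℕ) (k : Fin (m + 1) → G) (v : V) :
    ((((m : ℂ) + 1)⁻¹ • ∑ i, π (k i) v : V) : Completion V)
      = ((m : ℂ) + 1)⁻¹ • ∑ i, πt (k i) (↑v : Completion V) := by
  rw [Completion.coe_smul]
  congr 1
  have h1 : ((∑ i, π (k i) v : V) : Completion V) = ∑ i, (↑(π (k i) v) : Completion V) := by
    simpa only [LinearIsometry.coe_toLinearMap, Completion.coe_toComplₗᵢ] using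
      map_sum ((Completion.toComplₗᵢ : V →ₗᵢ[ℂ] Completion V).toLinearMap)
        (fun i => π (k i) v) Finset.univ
  rw [h1]
  exact Finset.sum_congr rfl (fun i _ => (hcompat (k i) v).symm)

end Pit


/-- Core lemma: every non-zero closed invariant subspace of the completion meets `V`. -/
theorem exists_smooth_vector
    (π : Representation ℂ G V) (hsmooth : IsSmooth π) (hadm : IsAdmissible π)
    (hcont : ∀ v : V, Continuous fun g : G => π g v)
    (πt : G → (Completion V →L[ℂ] Completion V))
    (hcompat : ∀ (g : G) (v : V), πt g (↑v : Completion V) = (↑(π g v) : Completion V))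
    (W : Submodule ℂ (Completion V)) (hWclosed : IsClosed (W : Set (Completion V)))
    (hWinv : ∀ g : G, ∀ w ∈ W, πt g w ∈ W) (hWbot : W ≠ ⊥) :
    ∃ v : V, v ≠ 0 ∧ (↑v : Completion V) ∈ W := by
  classical
  obtain ⟨w, hwW, hwne⟩ := Submodule.exists_mem_ne_zero_of_ne_bot hWbot
  have hwpos : 0 < ‖w‖ := norm_pos_iff.mpr hwne
  obtain ⟨K₀, hK₀cpt, hK₀open⟩ := exists_compactOpen_subgroup (G := G)
  obtain ⟨C, hC1, hC⟩ := exists_uniform_bound π πt hcont hcompat hK₀cpt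
  have hC0 : (0 : ℝ) < C := lt_of_lt_of_le one_pos hC1
  have happrox : ∀ x : Completion V, ∀ ε : ℝ, 0 < ε → ∃ v : V, ‖x - ↑v‖ < ε := by
    intro x ε hε
    have hd : x ∈ closure (Set.range ((↑) : V → Completion V)) := Completion.denseRange_coe x
    obtain ⟨y, hy, hxy⟩ := Metric.mem_closure_iff.mp hd ε hε
    obtain ⟨v, rfl⟩ := hy
    exact ⟨v, by rwa [← dist_eq_norm]⟩
  obtain ⟨v₀, hv₀⟩ := happrox w (‖w‖ / (4 * (C + 1))) (by positivity)
  set K : Subgroup G := K₀ ⊓ stab π v₀ with hKdef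
  have hKopen : IsOpen (K : Set G) := hK₀open.inter (hsmooth v₀)
  have hKsub : (K : Set G) ⊆ (K₀ : Set G) := fun g hg => hg.1
  have hKcpt : IsCompact (K : Set G) :=
    hK₀cpt.of_isClosed_subset (K.isClosed_of_isOpen hKopen) hKsub
  have hKK₀ : ∀ g ∈ K, g ∈ K₀ := fun g hg => (Subgroup.mem_inf.mp hg).1
  have hKstab : ∀ g ∈ K, π g v₀ = v₀ := fun g hg => (Subgroup.mem_inf.mp hg).2
  have hmove : ∀ g ∈ K, ‖πt g w - w‖ ≤ ‖w‖ / 2 := by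
    intro g hg
    have h1 : πt g w - w = πt g (w - ↑v₀) + ((↑v₀ : Completion V) - w) := by
      rw [map_sub]
      have h0 : πt g ↑v₀ = (↑v₀ : Completion V) := by rw [hcompat, hKstab g hg]
      rw [h0]
      abel
    rw [h1]
    have h2 : ‖πt g (w - ↑v₀)‖ ≤ C * ‖w - ↑v₀‖ := hC g (hKK₀ g hg) _
    have h3 : ‖(↑v₀ : Completion V) - w‖ = ‖w - ↑v₀‖ := norm_sub_rev _ _
    have h4 := norm_add_le (πt g (w - ↑v₀)) ((↑v₀ : Completion V) - w)
    have hδ : ‖w - ↑v₀‖ ≤ ‖w‖ / (4 * (C + 1)) := le_of_lt hv₀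
    have e2 : (C + 1) * ‖w - ↑v₀‖ ≤ (C + 1) * (‖w‖ / (4 * (C + 1))) :=
      mul_le_mul_of_nonneg_left hδ (by linarith)
    have e3 : (C + 1) * (‖w‖ / (4 * (C + 1))) = ‖w‖ / 4 := by
      field_simp
    nlinarith [norm_nonneg (w - (↑v₀ : Completion V))]
  have hseq : ∀ n : ℕ, ∃ v : V, ‖w - ↑v‖ < 1 / (n + 1) := fun n => happrox w _ (by positivity)
  choose v hv using hseq
  choose m k hkK hkfix using fun n => exists_average π hsmooth hKcpt (v n)
  set a : ℕ → V := fun n => ((m n : ℂ) + 1)⁻¹ • ∑ i, π (k n i) (v n) with ha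
  have hafix : ∀ n, a n ∈ fixedSubmodule π K := fun n => fun g hg => hkfix n g hg
  haveI hfd : FiniteDimensional ℂ (fixedSubmodule π K) := hadm K hKcpt hKopen
  set b : ℕ → Completion V := fun n => ((m n : ℂ) + 1)⁻¹ • ∑ i, πt (k n i) w with hb
  have hbW : ∀ n, b n ∈ W :=
    fun n => W.smul_mem _ (Submodule.sum_mem W (fun i _ => hWinv _ w hwW))
  have hcoe : ∀ n, ((a n : V) : Completion V)
      = ((m n : ℂ) + 1)⁻¹ • ∑ i, πt (k n i) (↑(v n) : Completion V) :=
    fun n => coe_avg π πt hcompat _ _ _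
  have hest1 : ∀ n, ‖(↑(a n) : Completion V) - b n‖ ≤ C * ‖w - ↑(v n)‖ := by
    intro n
    rw [hcoe n]
    show ‖_ - ((m n : ℂ) + 1)⁻¹ • ∑ i, πt (k n i) w‖ ≤ _
    rw [← smul_sub, ← Finset.sum_sub_distrib]
    have hterm : ∀ i : Fin (m n + 1),
        πt (k n i) (↑(v n) : Completion V) - πt (k n i) w = πt (k n i) (↑(v n) - w) :=
      fun i => (map_sub _ _ _).symm
    simp only [hterm]
    have := avg_norm_le (m n) (fun i => πt (k n i) ((↑(v n) : Completion V) - w))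
      (D := C * ‖(↑(v n) : Completion V) - w‖)
      (fun i => hC _ (hKK₀ _ (hkK n i)) _)
    calc ‖((m n : ℂ) + 1)⁻¹ • ∑ i, πt (k n i) ((↑(v n) : Completion V) - w)‖
        ≤ C * ‖(↑(v n) : Completion V) - w‖ := this
    _ = C * ‖w - ↑(v n)‖ := by rw [norm_sub_rev]
  have hest2 : ∀ n, ‖b n - w‖ ≤ ‖w‖ / 2 := by
    intro n
    have hdiff : ((m n : ℂ) + 1)⁻¹ • ∑ i : Fin (m n + 1), (πt (k n i) w - w) = b n - w := by
      rw [Finset.sum_sub_distrib, smul_sub, avg_const]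
    rw [← hdiff]
    exact avg_norm_le _ _ (fun i => hmove _ (hkK n i))
  have hvn1 : ∀ n : ℕ, ‖w - ↑(v n)‖ ≤ 1 := by
    intro n
    refine le_trans (le_of_lt (hv n)) ?_
    rw [div_le_one (by positivity)]
    linarith [Nat.cast_nonneg (α := ℝ) n]
  have hnorm_a : ∀ n, ‖a n‖ ≤ C + ‖w‖ / 2 + ‖w‖ := by
    intro n
    have h1 : ‖(↑(a n) : Completion V)‖ = ‖a n‖ := Completion.norm_coe _
    have h2 : ‖(↑(a n) : Completion V) - w‖ ≤ C * ‖w - ↑(v n)‖ + ‖w‖ / 2 := by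
      calc ‖(↑(a n) : Completion V) - w‖
          = ‖((↑(a n) : Completion V) - b n) + (b n - w)‖ := by rw [sub_add_sub_cancel]
      _ ≤ ‖(↑(a n) : Completion V) - b n‖ + ‖b n - w‖ := norm_add_le _ _
      _ ≤ C * ‖w - ↑(v n)‖ + ‖w‖ / 2 := add_le_add (hest1 n) (hest2 n)
    have h3 : ‖(↑(a n) : Completion V)‖ - ‖w‖ ≤ ‖(↑(a n) : Completion V) - w‖ :=
      norm_sub_norm_le _ _
    have h4 : C * ‖w - ↑(v n)‖ ≤ C * 1 := mul_le_mul_of_nonneg_left (hvn1 n) (le_of_lt hC0)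
    rw [← h1]
    linarith
  set S : Submodule ℂ V := fixedSubmodule π K with hS
  haveI : ProperSpace S := FiniteDimensional.proper ℂ S
  set vecs : ℕ → S := fun n => ⟨a n, hafix n⟩ with hvecs
  have hball : ∀ n, vecs n ∈ Metric.closedBall (0 : S) (C + ‖w‖ / 2 + ‖w‖) := by
    intro n
    rw [Metric.mem_closedBall, dist_zero_right]
    exact hnorm_a n
  obtain ⟨l, _, φ, hφmono, hφtend⟩ :=
    (isCompact_closedBall (0 : S) (C + ‖w‖ / 2 + ‖w‖)).tendsto_subseq hball
  set u : V := (l : V) with hu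
  have hvtend : Tendsto (fun n : ℕ => ‖w - ↑(v n)‖) atTop (𝓝 0) :=
    squeeze_zero (fun n => norm_nonneg _) (fun n => le_of_lt (hv n))
      tendsto_one_div_add_atTop_nhds_zero_nat
  have hφ : Tendsto (fun n => ‖w - ↑(v (φ n))‖) atTop (𝓝 0) :=
    hvtend.comp hφmono.tendsto_atTop
  have hatend : Tendsto (fun n => (↑(a (φ n)) : Completion V)) atTop (𝓝 ↑u) := by
    have h1 : Tendsto (fun n => a (φ n)) atTop (𝓝 (l : V)) :=
      ((continuous_subtype_val.tendsto l).comp hφtend)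
    exact ((Completion.continuous_coe V).tendsto _).comp h1
  have hbtend : Tendsto (fun n => b (φ n)) atTop (𝓝 ↑u) := by
    have h0 : Tendsto (fun n => (↑(a (φ n)) : Completion V) - b (φ n)) atTop (𝓝 0) := by
      refine squeeze_zero_norm (fun n => hest1 (φ n)) ?_
      have := hφ.const_mul C
      simpa using this
    have := hatend.sub h0
    simpa using this
  have huW : (↑u : Completion V) ∈ W :=
    hWclosed.mem_of_tendsto hbtend (Filter.Eventually.of_forall (fun n => hbW (φ n)))
  have hdist : ‖(↑u : Completion V) - w‖ ≤ ‖w‖ / 2 := by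
    have h1 : Tendsto (fun n => ‖(↑(a (φ n)) : Completion V) - w‖) atTop
        (𝓝 ‖(↑u : Completion V) - w‖) := (hatend.sub tendsto_const_nhds).norm
    have h2 : Tendsto (fun n => C * ‖w - ↑(v (φ n))‖ + ‖w‖ / 2) atTop (𝓝 (‖w‖ / 2)) := by
      have := (hφ.const_mul C).add (tendsto_const_nhds (x := ‖w‖ / 2))
      simpa using this
    refine le_of_tendsto_of_tendsto' h1 h2 (fun n => ?_)
    calc ‖(↑(a (φ n)) : Completion V) - w‖
        = ‖((↑(a (φ n)) : Completion V) - b (φ n)) + (b (φ n) - w)‖ := by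
          rw [sub_add_sub_cancel]
    _ ≤ ‖(↑(a (φ n)) : Completion V) - b (φ n)‖ + ‖b (φ n) - w‖ := norm_add_le _ _
    _ ≤ C * ‖w - ↑(v (φ n))‖ + ‖w‖ / 2 := add_le_add (hest1 _) (hest2 _)
  have hune : u ≠ 0 := by
    intro h
    rw [h] at hdist
    rw [Completion.coe_zero, zero_sub, norm_neg] at hdist
    linarith
  exact ⟨u, hune, huW⟩



/-- **Proposition.** Let `G` be a tdlc group and `(π, V)` a smooth admissible representation of
`G`, continuous with respect to a norm on `V`, and let `(π̃, Ṽ)` be the extension of `π` to the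
completion `Ṽ` of `V`. Then every non-zero closed `G`-invariant subspace of `Ṽ` intersects
`V` non-trivially, and `(π, V)` is algebraically irreducible if and only if `(π̃, Ṽ)` is
topologically irreducible. -/
theorem completion_invariant_subspaces
    (π : Representation ℂ G V)
    (hsmooth : IsSmooth π) (hadm : IsAdmissible π)
    (hcont : ∀ v : V, Continuous fun g : G => π g v)
    (πt : G → (Completion V →L[ℂ] Completion V))
    (hcompat : ∀ (g : G) (v : V), πt g (↑v : Completion V) = (↑(π g v) : Completion V)) :
    (∀ W : Submodule ℂ (Completion V), IsClosed (W : Set (Completion V)) →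
        (∀ g : G, ∀ w ∈ W, πt g w ∈ W) → W ≠ ⊥ →
        ∃ v : V, v ≠ 0 ∧ (↑v : Completion V) ∈ W) ∧
    (AlgIrreducible π ↔
      ∀ W : Submodule ℂ (Completion V), IsClosed (W : Set (Completion V)) →
        (∀ g : G, ∀ w ∈ W, πt g w ∈ W) → W = ⊥ ∨ W = ⊤) := by
  classical
  refine ⟨fun W hWc hWinv hWb =>
    exists_smooth_vector π hsmooth hadm hcont πt hcompat W hWc hWinv hWb, ?_, ?_⟩
  · -- algebraic irreducibility implies topological irreducibility
    intro halg W hWc hWinv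
    by_cases hWb : W = ⊥
    · exact Or.inl hWb
    right
    obtain ⟨v₀, hv₀ne, hv₀W⟩ :=
      exists_smooth_vector π hsmooth hadm hcont πt hcompat W hWc hWinv hWb
    set U : Submodule ℂ V :=
      { carrier := {v : V | (↑v : Completion V) ∈ W}
        add_mem' := by
          intro x y hx hy
          simp only [Set.mem_setOf_eq] at *
          rw [Completion.coe_add]
          exact W.add_mem hx hy
        zero_mem' := by
          simp only [Set.mem_setOf_eq, Completion.coe_zero]
          exact W.zero_mem
        smul_mem' := by
          intro c x hx
          simp only [Set.mem_setOf_eq] at *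
          rw [Completion.coe_smul]
          exact W.smul_mem c hx } with hU
    have hUinv : ∀ g : G, ∀ v ∈ U, π g v ∈ U := by
      intro g v hv
      show (↑(π g v) : Completion V) ∈ W
      rw [← hcompat]
      exact hWinv g _ hv
    have hUne : U ≠ ⊥ := by
      intro h
      have hmem : v₀ ∈ U := hv₀W
      rw [h] at hmem
      exact hv₀ne ((Submodule.mem_bot ℂ).mp hmem)
    rcases halg U hUinv with h | h
    · exact absurd h hUne
    rw [Submodule.eq_top_iff']
    intro x
    have hsub : Set.range ((↑) : V → Completion V) ⊆ (W : Set (Completion V)) := by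
      rintro _ ⟨v, rfl⟩
      have hmem : v ∈ U := h ▸ Submodule.mem_top
      exact hmem
    have hcl : closure (Set.range ((↑) : V → Completion V)) ⊆ (W : Set (Completion V)) := by
      rw [← hWc.closure_eq]
      exact closure_mono hsub
    exact hcl (Completion.denseRange_coe x)
  · -- topological irreducibility implies algebraic irreducibility
    intro htop U hUinv
    by_cases hUb : U = ⊥
    · exact Or.inl hUb
    right
    set f : V →ₗ[ℂ] Completion V :=
      ((Completion.toComplₗᵢ : V →ₗᵢ[ℂ] Completion V).toLinearMap) with hf
    have hfcoe : ∀ v : V, f v = (↑v : Completion V) := by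
      intro v
      simp only [hf, LinearIsometry.coe_toLinearMap, Completion.coe_toComplₗᵢ]
    set W : Submodule ℂ (Completion V) := (U.map f).topologicalClosure with hW
    have hWcoe : (W : Set (Completion V)) = closure ((U.map f : Submodule ℂ (Completion V)) : Set (Completion V)) :=
      Submodule.topologicalClosure_coe _
    have hWc : IsClosed (W : Set (Completion V)) := Submodule.isClosed_topologicalClosure _
    have hWinv : ∀ g : G, ∀ w ∈ W, πt g w ∈ W := by
      intro g w hw
      have hmap : Set.MapsTo (πt g) ((U.map f : Submodule ℂ (Completion V)) : Set (Completion V))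
          ((U.map f : Submodule ℂ (Completion V)) : Set (Completion V)) := by
        rintro x hx
        obtain ⟨v', hv', rfl⟩ := Submodule.mem_map.mp hx
        have : πt g (f v') = f (π g v') := by rw [hfcoe, hfcoe, hcompat]
        rw [this]
        exact Submodule.mem_map_of_mem (hUinv g v' hv')
      have hw' : w ∈ closure ((U.map f : Submodule ℂ (Completion V)) : Set (Completion V)) := by
        rw [← hWcoe]; exact hw
      have : πt g w ∈ closure ((U.map f : Submodule ℂ (Completion V)) : Set (Completion V)) :=
        map_mem_closure (πt g).continuous hw' hmap
      show πt g w ∈ (W : Set (Completion V))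
      rw [hWcoe]
      exact this
    have hWb : W ≠ ⊥ := by
      obtain ⟨u₀, hu₀U, hu₀ne⟩ := Submodule.exists_mem_ne_zero_of_ne_bot hUb
      intro h
      have h1 : f u₀ ∈ W := Submodule.le_topologicalClosure _ (Submodule.mem_map_of_mem hu₀U)
      rw [h] at h1
      have h2 := (Submodule.mem_bot ℂ).mp h1
      rw [hfcoe] at h2
      apply hu₀ne
      have h3 : ((u₀ : V) : Completion V) = ((0 : V) : Completion V) := by
        rw [h2, Completion.coe_zero]
      exact Completion.coe_injective V h3
    rcases htop W hWc hWinv with h | h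
    · exact absurd h hWb
    -- now W = ⊤ ; conclude U = ⊤
    rw [Submodule.eq_top_iff']
    intro v
    obtain ⟨K₀, hK₀cpt, hK₀open⟩ := exists_compactOpen_subgroup (G := G)
    obtain ⟨C, hC1, hC⟩ := exists_uniform_bound π πt hcont hcompat hK₀cpt
    have hC0 : (0 : ℝ) < C := lt_of_lt_of_le one_pos hC1
    set K : Subgroup G := K₀ ⊓ stab π v with hKdef
    have hKopen : IsOpen (K : Set G) := hK₀open.inter (hsmooth v)
    have hKsub : (K : Set G) ⊆ (K₀ : Set G) := fun g hg => hg.1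
    have hKcpt : IsCompact (K : Set G) :=
      hK₀cpt.of_isClosed_subset (K.isClosed_of_isOpen hKopen) hKsub
    have hKK₀ : ∀ g ∈ K, g ∈ K₀ := fun g hg => (Subgroup.mem_inf.mp hg).1
    have hKstab : ∀ g ∈ K, π g v = v := fun g hg => (Subgroup.mem_inf.mp hg).2
    have hVbound : ∀ g ∈ K₀, ∀ z : V, ‖π g z‖ ≤ C * ‖z‖ := by
      intro g hg z
      have := hC g hg (↑z : Completion V)
      rwa [hcompat, Completion.norm_coe, Completion.norm_coe] at this
    have hseq : ∀ n : ℕ, ∃ u' : V, u' ∈ U ∧ ‖v - u'‖ < 1 / (n + 1) := by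
      intro n
      have hvW : (↑v : Completion V) ∈ W := by rw [h]; exact Submodule.mem_top
      have hvcl : (↑v : Completion V) ∈
          closure ((U.map f : Submodule ℂ (Completion V)) : Set (Completion V)) := by
        rw [← hWcoe]; exact hvW
      obtain ⟨y, hy, hxy⟩ := Metric.mem_closure_iff.mp hvcl (1 / (n + 1)) (by positivity)
      obtain ⟨u', hu'U, rfl⟩ := Submodule.mem_map.mp hy
      refine ⟨u', hu'U, ?_⟩
      rw [hfcoe, dist_eq_norm] at hxy
      have : ((↑v : Completion V) - ↑u') = ((↑(v - u') : Completion V)) := by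
        rw [Completion.coe_sub]
      rw [this, Completion.norm_coe] at hxy
      exact hxy
    choose uu huuU huu using hseq
    choose m k hkK hkfix using fun n => exists_average π hsmooth hKcpt (uu n)
    set a : ℕ → V := fun n => ((m n : ℂ) + 1)⁻¹ • ∑ i, π (k n i) (uu n) with ha
    have haU : ∀ n, a n ∈ U :=
      fun n => U.smul_mem _ (Submodule.sum_mem U (fun i _ => hUinv _ _ (huuU n)))
    have hafix : ∀ n, a n ∈ fixedSubmodule π K := fun n => fun g hg => hkfix n g hg
    have hest : ∀ n, ‖a n - v‖ ≤ C * ‖v - uu n‖ := by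
      intro n
      have hv' : ((m n : ℂ) + 1)⁻¹ • ∑ _i : Fin (m n + 1), v = v := avg_const _ _
      have hdiff : ((m n : ℂ) + 1)⁻¹ • ∑ i : Fin (m n + 1), (π (k n i) (uu n) - v)
          = a n - v := by
        rw [Finset.sum_sub_distrib, smul_sub, hv']
      rw [← hdiff]
      have hterm : ∀ i : Fin (m n + 1), π (k n i) (uu n) - v = π (k n i) (uu n - v) := by
        intro i
        rw [map_sub, hKstab _ (hkK n i)]
      simp only [hterm]
      have := avg_norm_le (m n) (fun i => π (k n i) (uu n - v)) (D := C * ‖uu n - v‖)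
        (fun i => hVbound _ (hKK₀ _ (hkK n i)) _)
      calc ‖((m n : ℂ) + 1)⁻¹ • ∑ i, π (k n i) (uu n - v)‖ ≤ C * ‖uu n - v‖ := this
      _ = C * ‖v - uu n‖ := by rw [norm_sub_rev]
    set F : Submodule ℂ V := fixedSubmodule π K ⊓ U with hF
    haveI hfd : FiniteDimensional ℂ (fixedSubmodule π K) := hadm K hKcpt hKopen
    haveI : FiniteDimensional ℂ F := Submodule.finiteDimensional_of_le inf_le_left
    have hFclosed : IsClosed (F : Set V) := Submodule.closed_of_finiteDimensional F
    have htend : Tendsto a atTop (𝓝 v) := by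
      rw [tendsto_iff_norm_sub_tendsto_zero]
      refine squeeze_zero (g := fun n : ℕ => C * (1 / ((n : ℝ) + 1)))
        (fun n => norm_nonneg _) (fun n => ?_) ?_
      · exact le_trans (hest n) (mul_le_mul_of_nonneg_left (le_of_lt (huu n)) (le_of_lt hC0))
      · have := tendsto_one_div_add_atTop_nhds_zero_nat.const_mul C
        simpa using this
    have hvF : v ∈ F :=
      hFclosed.mem_of_tendsto htend
        (Filter.Eventually.of_forall (fun n => Submodule.mem_inf.mpr ⟨hafix n, haU n⟩))
    exact (Submodule.mem_inf.mp hvF).2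


end SmoothRep
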